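/- Fix K ≥ 1, W > 0, weights w_1, …, w_K > 0 with w_0 = 0, normalized noise powers η_0 ≥ η_1 ≥ … ≥ η_K > 0, a budget P̄ > 0 and an integer M ≥ 1. With f_l(x) = W·(w_l·log₂(x + η_l) − w_{l−1}·log₂(x + η_{l−1})) and x_{K+1} = 0, every maximizer (x_1, …, x_K) of Σ_{l=1}^{K} f_l(x_l) over the feasible set {P̄ ≥ x_1 ≥ … ≥ x_K ≥ 0 and |{l : x_l > x_{l+1}}| ≤ M} satisfies x_1 = P̄, i.e. the total budget is fully used. -/
import Mathlib


/-- `f_{q,q'}(y) = W·(w_{q'}·log₂(y + η_{q'}) − w_{q−1}·log₂(y + η_{q−1}))`. -/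
noncomputable def fqq (W : ℝ) (w η : ℕ → ℝ) (q q' : ℕ) (y : ℝ) : ℝ :=
  W * (w q' * Real.logb 2 (y + η q') - w (q - 1) * Real.logb 2 (y + η (q - 1)))

/-- The chain set `C(P) = {x : P ≥ x 1 ≥ … ≥ x K ≥ 0}` (only coordinates `1, …, K` matter). -/
def chainSet (K : ℕ) (P : ℝ) : Set (ℕ → ℝ) :=
  {x | x 1 ≤ P ∧ (∀ l, 1 ≤ l → l < K → x (l + 1) ≤ x l) ∧ 0 ≤ x K}

/-- The single-carrier objective `∑_{l=1}^{K} f_l(x_l)` with `f_l = f_{l,l}`. -/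
noncomputable def objSC (K : ℕ) (W : ℝ) (w η : ℕ → ℝ) (x : ℕ → ℝ) : ℝ :=
  ∑ l ∈ Finset.Icc 1 K, fqq W w η l l (x l)

/-- Number of active users `|{l : x_l > x_{l+1}}|`, with the convention `x_{K+1} = 0`. -/
noncomputable def activeCount (K : ℕ) (x : ℕ → ℝ) : ℕ :=
  {l : ℕ | 1 ≤ l ∧ l ≤ K ∧ (if l = K then 0 else x (l + 1)) < x l}.ncard

/-- SIC-constrained feasible set: chain constraints plus at most `M` active users. -/
def sicSet (K M : ℕ) (P : ℝ) : Set (ℕ → ℝ) :=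
  {x | x ∈ chainSet K P ∧ activeCount K x ≤ M}

/-- Telescoping sum of `f_l` evaluated at a common argument. -/
lemma fqq_telescope (W : ℝ) (w η : ℕ → ℝ) (hw0 : w 0 = 0) (c : ℝ) (j : ℕ) :
    ∑ l ∈ Finset.Icc 1 j, fqq W w η l l (c) = W * (w j * Real.logb 2 (c + η j)) := by
  induction j with
  | zero => simp [hw0]
  | succ n ih =>
    rw [Finset.sum_Icc_succ_top (Nat.succ_le_succ (Nat.zero_le n)), ih]
    simp only [fqq, Nat.add_sub_cancel]
    ring

/-- Every maximizer of `∑_{l=1}^{K} f_l(x_l)` over the SIC-constrained feasible set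
`{P ≥ x_1 ≥ … ≥ x_K ≥ 0, |{l : x_l > x_{l+1}}| ≤ M}` uses the full budget: `x 1 = P`. -/
theorem stmt_7
    (K M : ℕ) (hK : 1 ≤ K) (hM : 1 ≤ M) (W : ℝ) (hW : 0 < W)
    (w η : ℕ → ℝ) (hw0 : w 0 = 0)
    (hw : ∀ l, 1 ≤ l → l ≤ K → 0 < w l)
    (hη_pos : ∀ l, l ≤ K → 0 < η l)
    (hη_mono : ∀ l, l < K → η (l + 1) ≤ η l)
    (P : ℝ) (hP : 0 < P)
    (x : ℕ → ℝ) (hx : x ∈ sicSet K M P)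
    (hmax : ∀ y ∈ sicSet K M P, objSC K W w η y ≤ objSC K W w η x) :
    x 1 = P := by
  obtain ⟨⟨hx1P, hchain, hxK⟩, hcount⟩ := hx
  -- x is antitone on [1, K]
  have hanti : ∀ a b, 1 ≤ a → a ≤ b → b ≤ K → x b ≤ x a := by
    intro a b ha hab hbK
    induction b with
    | zero => omega
    | succ n ih =>
      rcases Nat.lt_or_ge a (n + 1) with h | h
      · have h1 : x (n + 1) ≤ x n := hchain n (by omega) (by omega)
        exact le_trans h1 (ih (by omega) (by omega))
      · have : a = n + 1 := by omega
        subst this; rfl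
  have hx1_nonneg : 0 ≤ x 1 := le_trans hxK (hanti 1 K le_rfl hK le_rfl)
  by_contra hne
  have hx1lt : x 1 < P := lt_of_le_of_ne hx1P hne
  -- j : the largest index in [1,K] with x j = x 1
  set S : Finset ℕ := (Finset.Icc 1 K).filter (fun l => x l = x 1) with hS
  have h1S : (1 : ℕ) ∈ S := by
    simp [hS, Finset.mem_filter, Finset.mem_Icc, hK]
  have hSne : S.Nonempty := ⟨1, h1S⟩
  set j := S.max' hSne with hj
  have hjS : j ∈ S := S.max'_mem hSne
  have hj1 : 1 ≤ j := by
    have := Finset.mem_filter.mp hjS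
    exact (Finset.mem_Icc.mp this.1).1
  have hjK : j ≤ K := by
    have := Finset.mem_filter.mp hjS
    exact (Finset.mem_Icc.mp this.1).2
  have hxj : x j = x 1 := (Finset.mem_filter.mp hjS).2
  have hjmax : ∀ l, l ∈ S → l ≤ j := fun l hl => S.le_max' l hl
  -- all coordinates up to j are equal to x 1
  have heq : ∀ l, 1 ≤ l → l ≤ j → x l = x 1 := by
    intro l hl1 hlj
    have h1 : x l ≤ x 1 := hanti 1 l le_rfl hl1 (le_trans hlj hjK)
    have h2 : x j ≤ x l := hanti l j hl1 hlj hjK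
    rw [hxj] at h2
    linarith
  -- beyond j, the value differs from x 1
  have hafter : ∀ l, j < l → l ≤ K → x l ≠ x 1 := by
    intro l hjl hlK hcon
    have : l ∈ S := by
      simp [hS, Finset.mem_filter, Finset.mem_Icc]
      exact ⟨⟨by omega, hlK⟩, hcon⟩
    exact absurd (hjmax l this) (by omega)
  -- the perturbed point
  set y : ℕ → ℝ := fun l => if 1 ≤ l ∧ l ≤ j then P else x l with hy
  have hy_P : ∀ l, 1 ≤ l → l ≤ j → y l = P := by
    intro l h1 h2; simp [hy, h1, h2]
  have hy_eq : ∀ l, j < l → y l = x l := by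
    intro l h; simp only [hy]; rw [if_neg (by omega)]
  -- y satisfies the chain constraints
  have hychain : y ∈ chainSet K P := by
    refine ⟨by rw [hy_P 1 le_rfl hj1], ?_, ?_⟩
    · intro l hl1 hlK
      rcases Nat.lt_or_ge l j with h | h
      · rw [hy_P l hl1 h.le, hy_P (l + 1) (by omega) (by omega)]
      · rcases Nat.lt_or_ge j l with h' | h'
        · rw [hy_eq l h', hy_eq (l + 1) (by omega)]
          exact hchain l hl1 hlK
        · have hlj : l = j := le_antisymm h' h
          rw [hlj, hy_P j hj1 le_rfl, hy_eq (j + 1) (by omega)]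
          have hh : x (j + 1) ≤ x j := hchain j hj1 (by omega)
          rw [hxj] at hh
          linarith
    · rcases Nat.lt_or_ge K j with h | h
      · omega
      · rcases Nat.lt_or_ge j K with h' | h'
        · rw [hy_eq K h']; exact hxK
        · have : j = K := le_antisymm (by omega) h'
          rw [hy_P K hK (by omega)]; exact hP.le
  -- active count of y is at most M
  have hycount : activeCount K y ≤ M := by
    rcases Nat.lt_or_ge j K with hjltK | hjgeK
    · -- j < K : active sets coincide
      have hsets : {l : ℕ | 1 ≤ l ∧ l ≤ K ∧ (if l = K then 0 else y (l + 1)) < y l}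
          = {l : ℕ | 1 ≤ l ∧ l ≤ K ∧ (if l = K then 0 else x (l + 1)) < x l} := by
        ext l
        simp only [Set.mem_setOf_eq]
        by_cases hbound : 1 ≤ l ∧ l ≤ K
        · obtain ⟨hl1, hlK⟩ := hbound
          rcases lt_trichotomy l j with hlt | rfl | hgt
          · have hlne : l ≠ K := by omega
            rw [if_neg hlne, if_neg hlne,
              hy_P l hl1 hlt.le, hy_P (l + 1) (by omega) (by omega),
              heq l hl1 hlt.le, heq (l + 1) (by omega) (by omega)]
            simp [lt_irrefl]
          · have hjne : j ≠ K := by omega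
            rw [if_neg hjne, if_neg hjne]
            have hle : x (j + 1) ≤ x j := hchain j hj1 (by omega)
            have hlt' : x (j + 1) < x j := by
              rcases lt_or_eq_of_le hle with h | h
              · exact h
              · exact absurd (h.trans hxj) (hafter (j + 1) (by omega) (by omega))
            have hy' : y (j + 1) < y j := by
              rw [hy_P j hj1 le_rfl, hy_eq (j + 1) (by omega)]
              calc x (j + 1) ≤ x j := hle
                _ = x 1 := hxj
                _ < P := hx1lt
            exact iff_of_true ⟨hj1, hjK, hy'⟩ ⟨hj1, hjK, hlt'⟩
          · rw [hy_eq l hgt]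
            by_cases hlKeq : l = K
            · rw [if_pos hlKeq, if_pos hlKeq]
            · rw [if_neg hlKeq, if_neg hlKeq, hy_eq (l + 1) (by omega)]
        · exact iff_of_false (by tauto) (by tauto)
      unfold activeCount
      rw [hsets]
      exact hcount
    · -- j = K : exactly one active user, namely K
      have hjKeq : j = K := le_antisymm hjK hjgeK
      have hsets : {l : ℕ | 1 ≤ l ∧ l ≤ K ∧ (if l = K then 0 else y (l + 1)) < y l}
          = {K} := by
        ext l
        simp only [Set.mem_setOf_eq, Set.mem_singleton_iff]
        constructor
        · rintro ⟨hl1, hlK, hlt⟩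
          by_contra hne'
          have hlltK : l < K := by omega
          rw [if_neg hne', hy_P l hl1 (by omega), hy_P (l + 1) (by omega) (by omega)] at hlt
          exact lt_irrefl _ hlt
        · intro hlK'
          refine ⟨by omega, by omega, ?_⟩
          rw [if_pos hlK', hy_P l (by omega) (by omega)]
          exact hP
      unfold activeCount
      rw [hsets, Set.ncard_singleton]
      exact hM
  have hyfeas : y ∈ sicSet K M P := ⟨hychain, hycount⟩
  -- split the objective sums
  have hsplit : ∀ z : ℕ → ℝ, objSC K W w η z
      = (∑ l ∈ Finset.Icc 1 j, fqq W w η l l (z l))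
        + ∑ l ∈ Finset.Ioc j K, fqq W w η l l (z l) := by
    intro z
    unfold objSC
    rw [show Finset.Icc 1 K = Finset.Ioc 0 K from Finset.Icc_add_one_left_eq_Ioc 0 K,
      show Finset.Icc 1 j = Finset.Ioc 0 j from Finset.Icc_add_one_left_eq_Ioc 0 j,
      Finset.sum_Ioc_consecutive _ (Nat.zero_le j) hjK]
  -- compare objectives
  have hy_obj : objSC K W w η y
      = W * (w j * Real.logb 2 (P + η j)) + ∑ l ∈ Finset.Ioc j K, fqq W w η l l (x l) := by
    rw [hsplit y]
    congr 1
    · rw [Finset.sum_congr rfl (fun l hl => by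
        rw [hy_P l (Finset.mem_Icc.mp hl).1 (Finset.mem_Icc.mp hl).2]),
        fqq_telescope W w η hw0 P j]
    · exact Finset.sum_congr rfl fun l hl => by
        rw [hy_eq l (Finset.mem_Ioc.mp hl).1]
  have hx_obj : objSC K W w η x
      = W * (w j * Real.logb 2 (x 1 + η j)) + ∑ l ∈ Finset.Ioc j K, fqq W w η l l (x l) := by
    rw [hsplit x]
    congr 1
    rw [Finset.sum_congr rfl (fun l hl => by
      rw [heq l (Finset.mem_Icc.mp hl).1 (Finset.mem_Icc.mp hl).2]),
      fqq_telescope W w η hw0 (x 1) j]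
  have hηj : 0 < η j := hη_pos j hjK
  have hlog : Real.logb 2 (x 1 + η j) < Real.logb 2 (P + η j) :=
    Real.logb_lt_logb one_lt_two (by linarith) (by linarith)
  have hkey : objSC K W w η x < objSC K W w η y := by
    rw [hx_obj, hy_obj]
    have := mul_lt_mul_of_pos_left (mul_lt_mul_of_pos_left hlog (hw j hj1 hjK)) hW
    linarith
  exact absurd (hmax y hyfeas) (not_le.mpr hkey)
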